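/- Suppose in addition that σ(s) ≥ 0 and σ′(s) ≥ 0 for all s ∈ ℝ. Then for every (s, t) ∈ ℝ², ω_{φ(s,t)}(Dφ(s,t)·e₁, Dφ(s,t)·e₂) ≥ 0, where e₁, e₂ is the standard basis of ℝ²; that is, the pullback of ω along φ is a non-negative multiple of the area form ds ∧ dt, so ω restricts non-negatively to the perturbed surface parametrized by φ with its given orientation. -/

import Mathlib

set_option maxHeartbeats 1000000 in


/-- If `σ ≥ 0` and `σ′ ≥ 0` everywhere, then the pullback of the 2-form
`ω = d(e^s(cos θ dx − sin θ dy))` on `ℝ⁴` along `φ(s, t) = (s, t, σ(s) sin t, σ(s) cos t)`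
is a non-negative multiple of `ds ∧ dt`: for every `(s, t)`,
`ω_{φ(s,t)}(Dφ(s,t)·e₁, Dφ(s,t)·e₂) ≥ 0`, where `e₁ = (1,0)`, `e₂ = (0,1)`. -/
theorem pullback_two_form_nonneg (σ : ℝ → ℝ) (hσ : Differentiable ℝ σ)
    (hσ0 : ∀ s, 0 ≤ σ s) (hσ'0 : ∀ s, 0 ≤ deriv σ s)
    (φ : ℝ × ℝ → Fin 4 → ℝ)
    (hφ : ∀ p : ℝ × ℝ, φ p = ![p.1, p.2, σ p.1 * Real.sin p.2, σ p.1 * Real.cos p.2])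
    (ω : (Fin 4 → ℝ) → (Fin 4 → ℝ) → (Fin 4 → ℝ) → ℝ)
    (hω : ∀ p v w, ω p v w = Real.exp (p 0) *
      (Real.cos (p 1) * (v 0 * w 2 - v 2 * w 0)
        - Real.sin (p 1) * (v 0 * w 3 - v 3 * w 0)
        - Real.sin (p 1) * (v 1 * w 2 - v 2 * w 1)
        - Real.cos (p 1) * (v 1 * w 3 - v 3 * w 1))) :
    ∀ (s t : ℝ),
      0 ≤ ω (φ (s, t)) (fderiv ℝ φ (s, t) ((1 : ℝ), (0 : ℝ)))
            (fderiv ℝ φ (s, t) ((0 : ℝ), (1 : ℝ))) := by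
  have hφ' : φ = fun p : ℝ × ℝ => ![p.1, p.2, σ p.1 * Real.sin p.2, σ p.1 * Real.cos p.2] :=
    funext hφ
  subst hφ'
  intro s t
  have hA : HasFDerivAt (fun p : ℝ × ℝ => σ p.1)
      (deriv σ s • ContinuousLinearMap.fst ℝ ℝ ℝ) (s, t) :=
    ((hσ s).hasDerivAt).comp_hasFDerivAt (s, t) (hasFDerivAt_fst)
  have hSin : HasFDerivAt (fun p : ℝ × ℝ => Real.sin p.2)
      (Real.cos t • ContinuousLinearMap.snd ℝ ℝ ℝ) (s, t) :=
    (Real.hasDerivAt_sin (s, t).2).comp_hasFDerivAt (s, t) (hasFDerivAt_snd)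
  have hCos : HasFDerivAt (fun p : ℝ × ℝ => Real.cos p.2)
      ((-Real.sin t) • ContinuousLinearMap.snd ℝ ℝ ℝ) (s, t) :=
    (Real.hasDerivAt_cos (s, t).2).comp_hasFDerivAt (s, t) (hasFDerivAt_snd)
  set L2 : ℝ × ℝ →L[ℝ] ℝ :=
    σ s • (Real.cos t • ContinuousLinearMap.snd ℝ ℝ ℝ)
      + Real.sin t • (deriv σ s • ContinuousLinearMap.fst ℝ ℝ ℝ) with hL2
  set L3 : ℝ × ℝ →L[ℝ] ℝ :=
    σ s • ((-Real.sin t) • ContinuousLinearMap.snd ℝ ℝ ℝ)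
      + Real.cos t • (deriv σ s • ContinuousLinearMap.fst ℝ ℝ ℝ) with hL3
  have h2 : HasFDerivAt (fun p : ℝ × ℝ => σ p.1 * Real.sin p.2) L2 (s, t) := hA.mul hSin
  have h3 : HasFDerivAt (fun p : ℝ × ℝ => σ p.1 * Real.cos p.2) L3 (s, t) := hA.mul hCos
  set L : ℝ × ℝ →L[ℝ] (Fin 4 → ℝ) :=
    ContinuousLinearMap.pi
      ![ContinuousLinearMap.fst ℝ ℝ ℝ, ContinuousLinearMap.snd ℝ ℝ ℝ, L2, L3] with hL
  have hD : HasFDerivAt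
      (fun p : ℝ × ℝ => ![p.1, p.2, σ p.1 * Real.sin p.2, σ p.1 * Real.cos p.2]) L (s, t) := by
    rw [hL, hasFDerivAt_pi]
    intro i
    fin_cases i <;> simp only [Matrix.cons_val_zero, Matrix.cons_val_one, Matrix.head_cons,
      Matrix.cons_val_two, Matrix.tail_cons, Matrix.cons_val_three]
    · exact hasFDerivAt_fst
    · exact hasFDerivAt_snd
    · exact h2
    · exact h3
  rw [hD.fderiv, hω]
  simp only [hL, hL2, hL3, ContinuousLinearMap.pi_apply, ContinuousLinearMap.add_apply,
    ContinuousLinearMap.smul_apply, ContinuousLinearMap.coe_fst',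
    ContinuousLinearMap.coe_snd', smul_eq_mul, Matrix.cons_val_zero, Matrix.cons_val_one,
    Matrix.head_cons, Matrix.cons_val_two, Matrix.tail_cons, Matrix.cons_val_three,
    Matrix.cons_val', Matrix.empty_val', Matrix.cons_val_fin_one]
  have h1 := Real.sin_sq_add_cos_sq t
  have h4 := (Real.exp_pos s).le
  nlinarith [h1, mul_nonneg h4 (add_nonneg (hσ0 s) (hσ'0 s)),
    mul_nonneg h4 (hσ0 s), mul_nonneg h4 (hσ'0 s), sq_nonneg (Real.sin t), sq_nonneg (Real.cos t)]
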